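/- Let G be a group and f, g : G → Z(G) homomorphisms with f(Z(G)) = 1 and g(Z(G)) = 1. Then f and g are invertible in the monoid Hom(G,Z(G)) (with product (f*g)(w) = f(w)g(w)(f∘g)(w)⁻¹), the product satisfies (f*g)(w) = f(w)g(w) for all w ∈ G, f*g = g*f, and the map w ↦ f(w)⁻¹ is the inverse of f. -/

import Mathlib

/-- `(f*g)(w) = f(w) · g(w) · f(g(w))⁻¹`. -/
def starFun {G : Type*} [Group G] (f g : G → Subgroup.center G) :
    G → Subgroup.center G :=
  fun w => f w * g w * (f ((g w : G)))⁻¹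

open scoped IsMulCommutative in
lemma starFun_inv_pair {G : Type*} [Group G] (f : G →* Subgroup.center G)
    (hf : ∀ z ∈ Subgroup.center G, f z = 1) :
    starFun ⇑f ⇑f⁻¹ = (fun _ => 1) ∧ starFun ⇑f⁻¹ ⇑f = (fun _ => 1) := by
  constructor <;> funext w <;>
    simp [starFun, hf ((f w : G)) (f w).2, mul_comm]

/-- If `f, g : G → Z(G)` are homomorphisms killing the center,
then `f` and `g` are invertible in the monoid `Hom(G, Z(G))`, the product
satisfies `(f*g)(w) = f(w)·g(w)` (hence `f*g = g*f`), and `w ↦ f(w)⁻¹` is the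
inverse of `f`. -/
theorem stmt_3 {G : Type*} [Group G] (f g : G →* Subgroup.center G)
    (hf : ∀ z ∈ Subgroup.center G, f z = 1) (hg : ∀ z ∈ Subgroup.center G, g z = 1) :
    (∃ f' : G →* Subgroup.center G,
        starFun ⇑f ⇑f' = (fun _ => 1) ∧ starFun ⇑f' ⇑f = (fun _ => 1)) ∧
    (∃ g' : G →* Subgroup.center G,
        starFun ⇑g ⇑g' = (fun _ => 1) ∧ starFun ⇑g' ⇑g = (fun _ => 1)) ∧
    (starFun ⇑f ⇑g = fun w => f w * g w) ∧
    starFun ⇑f ⇑g = starFun ⇑g ⇑f ∧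
    (∃ fi : G →* Subgroup.center G, (⇑fi = fun w => (f w)⁻¹) ∧
        starFun ⇑f ⇑fi = (fun _ => 1) ∧ starFun ⇑fi ⇑f = (fun _ => 1)) := by
  open scoped IsMulCommutative in
  refine ⟨⟨f⁻¹, starFun_inv_pair f hf⟩, ⟨g⁻¹, starFun_inv_pair g hg⟩, ?_, ?_,
    ⟨f⁻¹, rfl, starFun_inv_pair f hf⟩⟩
  · funext w
    simp [starFun, hf ((g w : G)) (g w).2]
  · funext w
    simp [starFun, hf ((g w : G)) (g w).2, hg ((f w : G)) (f w).2, mul_comm]
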